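/- For any block X = (X₁,…,X_L) of Golden codewords, det(Σᵢ XᵢXᵢᴴ) ≥ (Σᵢ |det(Xᵢ)|)² ≥ w_H(X)²·(1/5), where w_H(X) is the number of nonzero components. -/

import Mathlib

open Matrix

/-- The golden number θ = (1+√5)/2, as a complex number. -/
noncomputable def gold : ℂ := (1 + Real.sqrt 5) / 2

/-- Squared Frobenius norm of a 2×2 complex matrix. -/
noncomputable def fro2 (M : Matrix (Fin 2) (Fin 2) ℂ) : ℝ :=
  ∑ i, ∑ j, ‖M i j‖ ^ 2

/-- The element `a + bθ + i(c + dθ)` of `ℤ[i,θ]`. -/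
noncomputable def zit (a b c d : ℤ) : ℂ :=
  (a : ℂ) + b * gold + Complex.I * ((c : ℂ) + d * gold)

/-- Its conjugate under `θ ↦ 1 − θ`. -/
noncomputable def zitBar (a b c d : ℤ) : ℂ :=
  (a : ℂ) + b * (1 - gold) + Complex.I * ((c : ℂ) + d * (1 - gold))

/-- The matrix `[[w₁, w₂], [i·w̄₂, w̄₁]]` of the order `𝒪`, with
`w₁ = a + bθ + i(c+dθ)` and `w₂ = e + fθ + i(g+hθ)`. -/
noncomputable def Omat (a b c d e f g h : ℤ) : Matrix (Fin 2) (Fin 2) ℂ :=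
  !![zit a b c d, zit e f g h;
     Complex.I * zitBar e f g h, zitBar a b c d]

/-- Membership in the order `𝒪`. -/
def inO (W : Matrix (Fin 2) (Fin 2) ℂ) : Prop :=
  ∃ a b c d e f g h : ℤ, W = Omat a b c d e f g h

/-- `α = 1 + i·θ̄ = 1 + i(1−θ)`. -/
noncomputable def alphaG : ℂ := 1 + Complex.I * (1 - gold)

/-- `ᾱ = 1 + i·θ`. -/
noncomputable def alphaBarG : ℂ := 1 + Complex.I * gold

/-- `A = diag(α, ᾱ)`. -/
noncomputable def Amat : Matrix (Fin 2) (Fin 2) ℂ := !![alphaG, 0; 0, alphaBarG]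

/-- Membership in the Golden Code `𝒢 = (1/√5)·A·𝒪`. -/
def inG (X : Matrix (Fin 2) (Fin 2) ℂ) : Prop :=
  ∃ W, inO W ∧ X = ((Real.sqrt 5 : ℂ))⁻¹ • (Amat * W)

/-! ### Arithmetic of ℤ[i]: descent showing the Golden code is nondegenerate -/

noncomputable def phi5 : GaussianInt →+* ZMod 5 := Zsqrtd.lift ⟨3, by decide⟩

lemma phi5_apply (z : GaussianInt) : phi5 z = (z.re : ZMod 5) + (z.im : ZMod 5) * 3 := by
  simp [phi5, Zsqrtd.lift]

def piG : GaussianInt := ⟨2, 1⟩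

lemma ker_phi5 {z : GaussianInt} (h : phi5 z = 0) : ∃ w, z = piG * w := by
  rw [phi5_apply] at h
  have h' : ((z.re + 3 * z.im : ℤ) : ZMod 5) = 0 := by push_cast; linear_combination h
  obtain ⟨k, hk⟩ := (ZMod.intCast_zmod_eq_zero_iff_dvd _ 5).mp h'
  refine ⟨⟨2 * k - z.im, z.im - k⟩, ?_⟩
  have hz : z.re = 5 * k - 3 * z.im := by push_cast at hk; linarith
  ext <;> simp [piG, Zsqrtd.re_mul, Zsqrtd.im_mul] <;> omega

def iG : GaussianInt := ⟨0, 1⟩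

lemma sq_mod5 : ∀ a b : ZMod 5, a ^ 2 = 3 * b ^ 2 → a = 0 ∧ b = 0 := by decide

lemma norm_natAbs_eq_zero {z : GaussianInt} (h : z.norm.natAbs = 0) : z = 0 := by
  have := Int.natAbs_eq_zero.mp h
  exact (Zsqrtd.norm_eq_zero (by intro n; nlinarith [sq_nonneg n]) z).mp this

lemma natAbs_norm_pi_mul (w : GaussianInt) :
    (piG * w).norm.natAbs = 5 * w.norm.natAbs := by
  rw [Zsqrtd.norm_mul]
  have : (piG).norm = 5 := by decide
  rw [this, Int.natAbs_mul]; rfl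

lemma phi_eq_of (X1 X2 Y1 Y2 : GaussianInt)
    (hE : X1 ^ 2 - iG * X2 ^ 2 = 5 * (Y1 ^ 2 - iG * Y2 ^ 2)) :
    phi5 X1 ^ 2 = 3 * phi5 X2 ^ 2 := by
  have h := congrArg phi5 hE
  simp only [_root_.map_sub, _root_.map_mul, _root_.map_pow, map_ofNat] at h
  have hi : phi5 iG = 3 := by rw [phi5_apply]; decide
  rw [hi] at h
  have h5 : (5 : ZMod 5) = 0 := by decide
  rw [h5, zero_mul] at h
  linear_combination h

lemma descent : ∀ n : ℕ, ∀ X1 X2 Y1 Y2 : GaussianInt,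
    X1.norm.natAbs + X2.norm.natAbs + Y1.norm.natAbs + Y2.norm.natAbs = n →
    X1 ^ 2 - iG * X2 ^ 2 = 5 * (Y1 ^ 2 - iG * Y2 ^ 2) →
    X1 = 0 ∧ X2 = 0 ∧ Y1 = 0 ∧ Y2 = 0 := by
  intro n
  induction n using Nat.strong_induction_on with
  | _ n ih =>
    intro X1 X2 Y1 Y2 hn hE
    rcases Nat.eq_zero_or_pos n with h0 | hpos
    · refine ⟨norm_natAbs_eq_zero ?_, norm_natAbs_eq_zero ?_,
        norm_natAbs_eq_zero ?_, norm_natAbs_eq_zero ?_⟩ <;> omega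
    · obtain ⟨hx1, hx2⟩ := sq_mod5 _ _ (phi_eq_of _ _ _ _ hE)
      obtain ⟨A, hA⟩ := ker_phi5 hx1
      obtain ⟨B, hB⟩ := ker_phi5 hx2
      have hpi5 : (5 : GaussianInt) = piG * ⟨2, -1⟩ := by decide
      have hpine : piG ≠ 0 := by decide
      have step1 : piG * (A ^ 2 - iG * B ^ 2) = ⟨2, -1⟩ * (Y1 ^ 2 - iG * Y2 ^ 2) := by
        have : piG * (piG * (A ^ 2 - iG * B ^ 2)) = piG * (⟨2, -1⟩ * (Y1 ^ 2 - iG * Y2 ^ 2)) := by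
          rw [hA, hB] at hE; rw [hpi5] at hE; ring_nf; ring_nf at hE; linear_combination hE
        exact mul_left_cancel₀ hpine this
      have hphiY : phi5 Y1 ^ 2 = 3 * phi5 Y2 ^ 2 := by
        have h := congrArg phi5 step1
        have hpi0 : phi5 piG = 0 := by rw [phi5_apply]; decide
        have hpibar : phi5 ⟨2, -1⟩ = -1 := by rw [phi5_apply]; decide
        have hi : phi5 iG = 3 := by rw [phi5_apply]; decide
        simp only [_root_.map_mul, _root_.map_sub, _root_.map_pow, hpi0, hpibar, hi, zero_mul] at h
        linear_combination h
      obtain ⟨hy1, hy2⟩ := sq_mod5 _ _ hphiY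
      obtain ⟨C, hC⟩ := ker_phi5 hy1
      obtain ⟨D, hD⟩ := ker_phi5 hy2
      have hE' : A ^ 2 - iG * B ^ 2 = 5 * (C ^ 2 - iG * D ^ 2) := by
        have : piG * (A ^ 2 - iG * B ^ 2) = piG * (5 * (C ^ 2 - iG * D ^ 2)) := by
          rw [hC, hD] at step1
          rw [step1, hpi5]; ring
        exact mul_left_cancel₀ hpine this
      have e1 := natAbs_norm_pi_mul A
      have e2 := natAbs_norm_pi_mul B
      have e3 := natAbs_norm_pi_mul C
      have e4 := natAbs_norm_pi_mul D
      rw [← hA] at e1; rw [← hB] at e2; rw [← hC] at e3; rw [← hD] at e4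
      set m := A.norm.natAbs + B.norm.natAbs + C.norm.natAbs + D.norm.natAbs with hm
      have hmn : n = 5 * m := by omega
      have hmlt : m < n := by omega
      obtain ⟨z1, z2, z3, z4⟩ := ih m hmlt A B C D rfl hE'
      subst z1 z2 z3 z4
      simp [hA, hB, hC, hD]

/-! ### Determinants of Golden codewords -/

lemma gold_sq' : gold ^ 2 = gold + 1 := by
  have h5 : (Real.sqrt 5 : ℂ) ^ 2 = 5 := by
    rw [← Complex.ofReal_pow, Real.sq_sqrt (by norm_num : (5:ℝ) ≥ 0)]; norm_num
  unfold gold; linear_combination h5/4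

open GaussianInt in
lemma zit_eq (a b c d : ℤ) :
    zit a b c d = toComplex ⟨a, c⟩ + toComplex ⟨b, d⟩ * gold := by
  rw [toComplex_def, toComplex_def]; unfold zit; push_cast; ring

open GaussianInt in
lemma zitBar_eq (a b c d : ℤ) :
    zitBar a b c d = toComplex ⟨a, c⟩ + toComplex ⟨b, d⟩ * (1 - gold) := by
  rw [toComplex_def, toComplex_def]; unfold zitBar; push_cast; ring

def Qf (u v : GaussianInt) : GaussianInt := u * u + u * v - v * v

open GaussianInt in
lemma det_Omat (a b c d e f g h : ℤ) :
    (Omat a b c d e f g h).det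
      = toComplex (Qf ⟨a, c⟩ ⟨b, d⟩ - iG * Qf ⟨e, g⟩ ⟨f, h⟩) := by
  rw [Omat, det_fin_two_of]
  rw [zit_eq a b c d, zitBar_eq a b c d, zit_eq e f g h, zitBar_eq e f g h]
  have hiG : toComplex iG = Complex.I := by rw [toComplex_def]; simp [iG]
  simp only [_root_.map_sub, _root_.map_mul, _root_.map_add, Qf, hiG]
  linear_combination (- (toComplex ⟨b,d⟩)^2 + Complex.I * (toComplex ⟨f,h⟩)^2) * gold_sq'

lemma det_Amat : Amat.det = 2 + Complex.I := by
  rw [Amat, det_fin_two_of]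
  unfold alphaG alphaBarG
  linear_combination (-(Complex.I^2)) * gold_sq' + (-1 : ℂ) * Complex.I_sq

open GaussianInt in
lemma abs_toComplex_ge_one {z : GaussianInt} (hz : z ≠ 0) :
    1 ≤ ‖toComplex z‖ := by
  have h1 : (1:ℤ) ≤ z.norm := by
    rcases (Zsqrtd.norm_eq_zero (by intro n; nlinarith [sq_nonneg n]) z).not.mpr hz with h
    have := Zsqrtd.norm_nonneg (by norm_num : (-1:ℤ) ≤ 0) z
    omega
  have h2 : (1:ℝ) ≤ Complex.normSq (toComplex z) := by
    rw [← intCast_real_norm]; exact_mod_cast h1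
  have := Complex.sq_norm (toComplex z)
  nlinarith [norm_nonneg (toComplex z)]

open GaussianInt in
lemma golden_det_lb {Y : Matrix (Fin 2) (Fin 2) ℂ} (hY : inG Y) (hne : Y ≠ 0) :
    (Real.sqrt 5)⁻¹ ≤ ‖Y.det‖ := by
  obtain ⟨W, ⟨a, b, c, d, e, f, g, h, rfl⟩, rfl⟩ := hY
  have hXine : Qf ⟨a, c⟩ ⟨b, d⟩ - iG * Qf ⟨e, g⟩ ⟨f, h⟩ ≠ 0 := by
    intro h0
    apply hne
    have hE : (2 * (⟨a, c⟩ : GaussianInt) + ⟨b, d⟩) ^ 2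
          - iG * (2 * (⟨e, g⟩ : GaussianInt) + ⟨f, h⟩) ^ 2
        = 5 * ((⟨b, d⟩ : GaussianInt) ^ 2 - iG * (⟨f, h⟩ : GaussianInt) ^ 2) := by
      simp only [Qf] at h0
      linear_combination (4 : GaussianInt) * h0
    obtain ⟨z1, z2, z3, z4⟩ := descent _ _ _ _ _ rfl hE
    have hv : (⟨b, d⟩ : GaussianInt) = 0 := z3
    have ht : (⟨f, h⟩ : GaussianInt) = 0 := z4
    have hu : (⟨a, c⟩ : GaussianInt) = 0 := by
      have h2u : (2 : GaussianInt) * ⟨a, c⟩ = 0 := by rw [hv, add_zero] at z1; exact z1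
      rcases mul_eq_zero.mp h2u with h' | h'
      · exact absurd h' (by decide)
      · exact h'
    have hs : (⟨e, g⟩ : GaussianInt) = 0 := by
      have h2s : (2 : GaussianInt) * ⟨e, g⟩ = 0 := by rw [ht, add_zero] at z2; exact z2
      rcases mul_eq_zero.mp h2s with h' | h'
      · exact absurd h' (by decide)
      · exact h'
    have e1 : zit a b c d = 0 := by rw [zit_eq, hu, hv]; simp
    have e2 : zitBar a b c d = 0 := by rw [zitBar_eq, hu, hv]; simp
    have e3 : zit e f g h = 0 := by rw [zit_eq, hs, ht]; simp
    have e4 : zitBar e f g h = 0 := by rw [zitBar_eq, hs, ht]; simp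
    have hW : Omat a b c d e f g h = 0 := by
      unfold Omat
      rw [e1, e2, e3, e4]
      ext i j
      fin_cases i <;> fin_cases j <;> simp
    rw [hW]
    simp
  have hdet : (((Real.sqrt 5 : ℂ))⁻¹ • (Amat * Omat a b c d e f g h)).det
      = ((Real.sqrt 5 : ℂ))⁻¹ ^ 2
        * ((2 + Complex.I) * toComplex (Qf ⟨a, c⟩ ⟨b, d⟩ - iG * Qf ⟨e, g⟩ ⟨f, h⟩)) := by
    rw [Matrix.det_smul, Matrix.det_mul, det_Amat, det_Omat]
    norm_num
  rw [hdet]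
  rw [norm_mul, norm_mul, norm_pow]
  have h1 : ‖((Real.sqrt 5 : ℂ))⁻¹‖ = (Real.sqrt 5)⁻¹ := by
    rw [norm_inv, Complex.norm_real, Real.norm_of_nonneg (Real.sqrt_nonneg 5)]
  have h2 : ‖(2 + Complex.I)‖ = Real.sqrt 5 := by
    rw [Complex.norm_def]
    congr 1
    simp [Complex.normSq_apply]
    norm_num
  rw [h1, h2]
  have h3 := abs_toComplex_ge_one hXine
  have hs5 : Real.sqrt 5 * Real.sqrt 5 = 5 := Real.mul_self_sqrt (by norm_num)
  have hs5pos : 0 < Real.sqrt 5 := Real.sqrt_pos.mpr (by norm_num)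
  have key : (Real.sqrt 5)⁻¹ ^ 2 * Real.sqrt 5 = (Real.sqrt 5)⁻¹ := by
    field_simp
  calc (Real.sqrt 5)⁻¹ = (Real.sqrt 5)⁻¹ ^ 2 * Real.sqrt 5 * 1 := by rw [key, mul_one]
  _ ≤ (Real.sqrt 5)⁻¹ ^ 2 * (Real.sqrt 5 * ‖(toComplex
        (Qf ⟨a, c⟩ ⟨b, d⟩ - iG * Qf ⟨e, g⟩ ⟨f, h⟩))‖) := by
      rw [mul_assoc]
      apply mul_le_mul_of_nonneg_left _ (by positivity)
      exact mul_le_mul_of_nonneg_left h3 (le_of_lt hs5pos)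

lemma two_sqrt_mul_le {x y : ℝ} (hx : 0 ≤ x) (hy : 0 ≤ y) :
    2 * Real.sqrt (x * y) ≤ x + y := by
  rw [Real.sqrt_mul hx]
  nlinarith [sq_nonneg (Real.sqrt x - Real.sqrt y), Real.sq_sqrt hx, Real.sq_sqrt hy,
    Real.sqrt_nonneg x, Real.sqrt_nonneg y]

lemma core (p q r s n m t : ℝ) (hp : 0 ≤ p) (hq : 0 ≤ q) (hr : 0 ≤ r) (hs : 0 ≤ s)
    (hn : 0 ≤ n) (hm : 0 ≤ m) (hA : n ≤ p * q) (hB : m ≤ r * s) (ht : t ^ 2 ≤ n * m) :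
    0 ≤ (p + r) * (q + s) - (n + m + 2 * t) ∧
    Real.sqrt (p * q - n) + Real.sqrt (r * s - m) ≤
      Real.sqrt ((p + r) * (q + s) - (n + m + 2 * t)) := by
  have hTle : t ≤ Real.sqrt (n * m) := by
    calc t ≤ |t| := le_abs_self t
    _ = Real.sqrt (t ^ 2) := by rw [Real.sqrt_sq_eq_abs]
    _ ≤ Real.sqrt (n * m) := Real.sqrt_le_sqrt ht
  have h1 : 2 * Real.sqrt (n * m) ≤ 2 * Real.sqrt ((p * s) * (q * r)) := by
    have : n * m ≤ (p * s) * (q * r) := by nlinarith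
    have := Real.sqrt_le_sqrt this
    linarith
  have h2 : 2 * Real.sqrt ((p * s) * (q * r)) ≤ p * s + q * r :=
    two_sqrt_mul_le (by positivity) (by positivity)
  have hR : 0 ≤ p * s + q * r - 2 * t := by linarith
  -- key : 2√((pq−n)(rs−m)) ≤ ps+qr−2t
  have hprod : Real.sqrt ((p * q - n) * (r * s - m)) ≤ (p * s + q * r - 2 * t) / 2 := by
    have hhalf : (0:ℝ) ≤ (p * s + q * r - 2 * t) / 2 := by linarith
    rw [show (p * s + q * r - 2 * t) / 2
        = Real.sqrt (((p * s + q * r - 2 * t) / 2) ^ 2) from (Real.sqrt_sq hhalf).symm]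
    apply Real.sqrt_le_sqrt
    -- (pq−n)(rs−m) ≤ ((ps+qr−2t)/2)²
    have key : 2 * Real.sqrt (((p*q) * m) * ((r*s) * n)) ≤ (p*q) * m + (r*s) * n :=
      two_sqrt_mul_le (by positivity) (by positivity)
    have hcd : Real.sqrt ((p * s) * (q * r)) * Real.sqrt (n * m)
        = Real.sqrt (((p*q) * m) * ((r*s) * n)) := by
      rw [← Real.sqrt_mul (by positivity)]
      congr 1; ring
    -- chain: ps+qr−2t ≥ 2√(psqr) − 2√(nm) ≥ 0, square it
    set c := Real.sqrt ((p * s) * (q * r)) with hc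
    set d := Real.sqrt (n * m) with hd
    have hc2 : c ^ 2 = (p * s) * (q * r) := Real.sq_sqrt (by positivity)
    have hd2 : d ^ 2 = n * m := Real.sq_sqrt (by positivity)
    have hcd0 : 0 ≤ c ∧ 0 ≤ d := ⟨Real.sqrt_nonneg _, Real.sqrt_nonneg _⟩
    have hdc : d ≤ c := by nlinarith [hcd0.1, hcd0.2]
    -- (pq−n)(rs−m) ≤ (c−d)²
    have e1 : (p * q - n) * (r * s - m) ≤ (c - d) ^ 2 := by
      have : c * d = Real.sqrt (((p*q) * m) * ((r*s) * n)) := hcd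
      nlinarith [key, this]
    have e2 : c - d ≤ (p * s + q * r - 2 * t) / 2 := by linarith
    nlinarith [e1, e2, sub_nonneg.mpr hdc]
  -- finish
  set a := Real.sqrt (p * q - n) with ha
  set b := Real.sqrt (r * s - m) with hb
  have ha2 : a ^ 2 = p * q - n := Real.sq_sqrt (by linarith)
  have hb2 : b ^ 2 = r * s - m := Real.sq_sqrt (by linarith)
  have hab : a * b = Real.sqrt ((p * q - n) * (r * s - m)) :=
    (Real.sqrt_mul (by linarith) _).symm
  have han : 0 ≤ a := Real.sqrt_nonneg _
  have hbn : 0 ≤ b := Real.sqrt_nonneg _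
  have hsum : (a + b) ^ 2 ≤ (p + r) * (q + s) - (n + m + 2 * t) := by
    have : a * b ≤ (p * s + q * r - 2 * t) / 2 := hab ▸ hprod
    nlinarith [this]
  refine ⟨le_trans (by positivity) hsum, ?_⟩
  calc a + b = Real.sqrt ((a + b) ^ 2) := (Real.sqrt_sq (by linarith)).symm
  _ ≤ _ := Real.sqrt_le_sqrt hsum

open Matrix

def PSD2 (S : Matrix (Fin 2) (Fin 2) ℂ) : Prop :=
  S 1 0 = (starRingEnd ℂ) (S 0 1) ∧ (S 0 0).im = 0 ∧ (S 1 1).im = 0 ∧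
  0 ≤ (S 0 0).re ∧ 0 ≤ (S 1 1).re ∧ S.det.im = 0 ∧ 0 ≤ S.det.re

lemma det_re_im {S : Matrix (Fin 2) (Fin 2) ℂ}
    (h10 : S 1 0 = (starRingEnd ℂ) (S 0 1)) (h00 : (S 0 0).im = 0) (h11 : (S 1 1).im = 0) :
    S.det.re = (S 0 0).re * (S 1 1).re - Complex.normSq (S 0 1) ∧ S.det.im = 0 := by
  rw [Matrix.det_fin_two, h10]
  constructor <;>
    simp [Complex.mul_re, Complex.mul_im, Complex.normSq_apply, h00, h11] <;> ring

lemma psd2_zero : PSD2 0 := by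
  refine ⟨by simp, by simp, by simp, by simp, by simp, ?_, ?_⟩ <;> simp [Matrix.det_fin_two]

lemma psd2_outer (X : Matrix (Fin 2) (Fin 2) ℂ) :
    PSD2 (X * Xᴴ) ∧ Real.sqrt ((X * Xᴴ).det.re) = ‖X.det‖ := by
  have hdet : (X * Xᴴ).det = (Complex.normSq X.det : ℝ) := by
    rw [Matrix.det_mul, Matrix.det_conjTranspose, ← Complex.mul_conj]
    rfl
  have h10 : (X * Xᴴ) 1 0 = (starRingEnd ℂ) ((X * Xᴴ) 0 1) := by
    simp [Matrix.mul_apply, Matrix.conjTranspose_apply, Fin.sum_univ_two, mul_comm]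
  have h00 : (X * Xᴴ) 0 0 = (Complex.normSq (X 0 0) + Complex.normSq (X 0 1) : ℝ) := by
    simp [Matrix.mul_apply, Matrix.conjTranspose_apply, Fin.sum_univ_two, Complex.mul_conj]
  have h11 : (X * Xᴴ) 1 1 = (Complex.normSq (X 1 0) + Complex.normSq (X 1 1) : ℝ) := by
    simp [Matrix.mul_apply, Matrix.conjTranspose_apply, Fin.sum_univ_two, Complex.mul_conj]
  refine ⟨⟨h10, by rw [h00]; simp, by rw [h11]; simp,
      by rw [h00]; simp; exact add_nonneg (Complex.normSq_nonneg _) (Complex.normSq_nonneg _),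
      by rw [h11]; simp; exact add_nonneg (Complex.normSq_nonneg _) (Complex.normSq_nonneg _),
      by rw [hdet]; simp, by rw [hdet]; simp; exact Complex.normSq_nonneg _⟩, ?_⟩
  rw [hdet]
  simp [Complex.norm_def]

lemma psd2_add {A B : Matrix (Fin 2) (Fin 2) ℂ} (hA : PSD2 A) (hB : PSD2 B) :
    PSD2 (A + B) ∧
      Real.sqrt (A.det.re) + Real.sqrt (B.det.re) ≤ Real.sqrt ((A + B).det.re) := by
  obtain ⟨a10, a00, a11, a00n, a11n, adet, adetn⟩ := hA
  obtain ⟨b10, b00, b11, b00n, b11n, bdet, bdetn⟩ := hB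
  obtain ⟨are, aim⟩ := det_re_im a10 a00 a11
  obtain ⟨bre, bim⟩ := det_re_im b10 b00 b11
  have s10 : (A + B) 1 0 = (starRingEnd ℂ) ((A + B) 0 1) := by
    simp [a10, b10]
  have s00 : ((A + B) 0 0).im = 0 := by simp [a00, b00]
  have s11 : ((A + B) 1 1).im = 0 := by simp [a11, b11]
  obtain ⟨sre, sim⟩ := det_re_im s10 s00 s11
  set p := (A 0 0).re; set q := (A 1 1).re; set r := (B 0 0).re; set sv := (B 1 1).re
  set n := Complex.normSq (A 0 1) with hndef
  set m := Complex.normSq (B 0 1) with hmdef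
  set t := (A 0 1 * (starRingEnd ℂ) (B 0 1)).re with htdef
  have hsplit : Complex.normSq (A 0 1 + B 0 1) = n + m + 2 * t := by
    simp [Complex.normSq_apply, Complex.mul_re, n, m, t]; ring
  have hSre : (A + B).det.re = (p + r) * (q + sv) - (n + m + 2 * t) := by
    rw [sre]; simp [hsplit]; rfl
  have ht : t ^ 2 ≤ n * m := by
    have htexp : t = (A 0 1).re * (B 0 1).re + (A 0 1).im * (B 0 1).im := by
      rw [htdef, Complex.mul_re]; simp
    have hnexp : n = (A 0 1).re ^ 2 + (A 0 1).im ^ 2 := by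
      rw [hndef, Complex.normSq_apply]; ring
    have hmexp : m = (B 0 1).re ^ 2 + (B 0 1).im ^ 2 := by
      rw [hmdef, Complex.normSq_apply]; ring
    rw [htexp, hnexp, hmexp]
    nlinarith [sq_nonneg ((A 0 1).re * (B 0 1).im - (A 0 1).im * (B 0 1).re)]
  have hn : 0 ≤ n := Complex.normSq_nonneg _
  have hm : 0 ≤ m := Complex.normSq_nonneg _
  have hAnm : n ≤ p * q := by rw [are] at adetn; linarith
  have hBnm : m ≤ r * sv := by rw [bre] at bdetn; linarith
  have hcore := core p q r sv n m t a00n a11n b00n b11n hn hm hAnm hBnm ht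
  have hDnn : 0 ≤ (A + B).det.re := by rw [hSre]; exact hcore.1
  refine ⟨⟨s10, s00, s11, by simp [a00n, b00n]; positivity, by simp; positivity, sim, hDnn⟩, ?_⟩
  rw [are, bre, hSre]
  exact hcore.2

lemma psd2_sum {L : ℕ} (X : Fin L → Matrix (Fin 2) (Fin 2) ℂ) (s : Finset (Fin L)) :
    PSD2 (∑ k ∈ s, X k * (X k)ᴴ) ∧
    ∑ k ∈ s, ‖(X k).det‖ ≤ Real.sqrt ((∑ k ∈ s, X k * (X k)ᴴ).det.re) := by
  classical
  induction s using Finset.induction_on with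
  | empty =>
      constructor
      · simpa using psd2_zero
      · simp
  | @insert a s ha ih =>
      rw [Finset.sum_insert ha, Finset.sum_insert ha]
      obtain ⟨hP, hS⟩ := ih
      obtain ⟨hPa, hEq⟩ := psd2_outer (X a)
      obtain ⟨hP', hle⟩ := psd2_add hPa hP
      refine ⟨hP', ?_⟩
      rw [← hEq] at *
      linarith

/-- For a block `X = (X₁,…,X_L)` of Golden codewords,
`det(Σᵢ XᵢXᵢᴴ) ≥ (Σᵢ |det Xᵢ|)² ≥ w_H(X)²·(1/5)`. -/
theorem det_block_ge_hamming (L : ℕ) (X : Fin L → Matrix (Fin 2) (Fin 2) ℂ)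
    (hX : ∀ k, inG (X k)) :
    (∑ k, ‖(X k).det‖) ^ 2 ≤ ‖(∑ k, X k * (X k)ᴴ).det‖ ∧
    (Set.ncard {k | X k ≠ 0} : ℝ) ^ 2 * (1 / 5) ≤ (∑ k, ‖(X k).det‖) ^ 2 := by
  classical
  obtain ⟨hP, hS⟩ := psd2_sum X Finset.univ
  obtain ⟨h10, h00, h11, hr0, hr1, hdim, hdre⟩ := hP
  have hnn : 0 ≤ ∑ k, ‖(X k).det‖ :=
    Finset.sum_nonneg fun k _ => norm_nonneg _
  constructor
  · have hd : ‖(∑ k, X k * (X k)ᴴ).det‖ = (∑ k, X k * (X k)ᴴ).det.re := by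
      have hns : Complex.normSq (∑ k, X k * (X k)ᴴ).det = (∑ k, X k * (X k)ᴴ).det.re ^ 2 := by
        rw [Complex.normSq_apply, hdim]; ring
      rw [Complex.norm_def, hns, Real.sqrt_sq hdre]
    rw [hd]
    nlinarith [Real.sq_sqrt hdre, hS, hnn, Real.sqrt_nonneg ((∑ k, X k * (X k)ᴴ).det.re)]
  · set F := Finset.univ.filter (fun k => X k ≠ 0) with hF
    have hset : {k | X k ≠ 0} = (F : Set (Fin L)) := by ext k; simp [hF]
    have hcard : (({k | X k ≠ 0} : Set (Fin L)).ncard : ℝ) = (F.card : ℝ) := by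
      rw [hset, Set.ncard_coe_finset]
    have hs5pos : 0 < Real.sqrt 5 := Real.sqrt_pos.mpr (by norm_num)
    have hlb : ∀ k ∈ F, (Real.sqrt 5)⁻¹ ≤ ‖(X k).det‖ := by
      intro k hk
      exact golden_det_lb (hX k) (by simpa [hF] using hk)
    have h1 : (F.card : ℝ) * (Real.sqrt 5)⁻¹ ≤ ∑ k ∈ F, ‖(X k).det‖ := by
      calc (F.card : ℝ) * (Real.sqrt 5)⁻¹ = ∑ _k ∈ F, (Real.sqrt 5)⁻¹ := by
            rw [Finset.sum_const, nsmul_eq_mul]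
      _ ≤ _ := Finset.sum_le_sum hlb
    have h2 : ∑ k ∈ F, ‖(X k).det‖ ≤ ∑ k, ‖(X k).det‖ :=
      Finset.sum_le_sum_of_subset_of_nonneg (Finset.subset_univ F)
        (fun i _ _ => norm_nonneg _)
    have hchain : (F.card : ℝ) * (Real.sqrt 5)⁻¹ ≤ ∑ k, ‖(X k).det‖ :=
      le_trans h1 h2
    have hsq : ((F.card : ℝ) * (Real.sqrt 5)⁻¹) ^ 2 = (F.card : ℝ) ^ 2 * (1 / 5) := by
      rw [mul_pow, inv_pow, Real.sq_sqrt (by norm_num : (0:ℝ) ≤ 5)]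
      norm_num
    have := pow_le_pow_left₀ (by positivity : (0:ℝ) ≤ (F.card : ℝ) * (Real.sqrt 5)⁻¹) hchain 2
    rw [hsq] at this
    rw [hcard]
    exact this
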